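/- For every view φ and every domain d, the image under the lifted map φ_Asn of the assignment set of d equals the assignment set of the pointwise-image domain, i.e. φ_Asn '' ⟦d⟧ = ⟦fun x => φ_x '' (d x)⟧; and the preimage under φ_Asn of the assignment set of d equals the assignment set of the pointwise-preimage domain, i.e. φ_Asn ⁻¹' ⟦d⟧ = ⟦fun x => φ_x ⁻¹' (d x)⟧. Hence views map domains to domains. -/
import Mathlib

namespace Stmt0

variable {Var Val Val' : Type*}

/-- The assignment set of a domain. -/
def asn (d : Var → Set Val) : Set (Var → Val) := {a | ∀ x, a x ∈ d x}

/-- A view lifted to assignments. -/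
def lift (φ : Var → Val → Val') (a : Var → Val) : Var → Val' := fun x => φ x (a x)

/-- For every view `φ` and every domain `d`, the image under the lifted map `φ_Asn` of the
assignment set of `d` equals the assignment set of the pointwise-image domain, and the preimage
under `φ_Asn` of the assignment set of a domain equals the assignment set of the
pointwise-preimage domain.  Hence views map domains to domains. -/
theorem views_map_domains_to_domains (φ : Var → Val → Val')
    (hφ : ∀ x, Function.Injective (φ x)) :
    (∀ d : Var → Set Val,
      lift φ '' asn d = asn (fun x => φ x '' d x)) ∧
    (∀ d : Var → Set Val',
      lift φ ⁻¹' asn d = asn (fun x => φ x ⁻¹' d x)) := by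
  constructor
  · intro d
    ext a'
    constructor
    · rintro ⟨a, ha, rfl⟩ x
      exact ⟨a x, ha x, rfl⟩
    · intro h
      choose a ha hEq using h
      exact ⟨a, ha, funext fun x => hEq x⟩
  · intro d
    rfl

end Stmt0
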